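/- (Proposition 2) For every n ≥ 1 there exists a bijection g from {1, …, 2^n} onto {−1, 1}^n such that for every pair (k, l) with 1 ≤ k ≤ l ≤ n, the 2^n-component vector whose j-th entry is m(g(j))_{kl} (equal to g(j)_k if k = l, and to g(j)_k · g(j)_l if k < l) belongs to SA(n). Equivalently, after reordering its columns by g, every row of the matrix M is the transpose of an element of SA(n). -/

import Mathlib

noncomputable def Smat (k : ℕ) : Matrix (Fin (2 ^ (k + 1))) (Fin (2 ^ k)) ℝ :=
  Matrix.of fun i j =>
    if (i : ℕ) < 2 ^ k then (if (i : ℕ) = (j : ℕ) then 1 else 0)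
    else (if (i : ℕ) + (j : ℕ) = 2 ^ (k + 1) - 1 then 1 else 0)

noncomputable def Amat (k : ℕ) : Matrix (Fin (2 ^ (k + 1))) (Fin (2 ^ k)) ℝ :=
  Matrix.of fun i j =>
    if (i : ℕ) < 2 ^ k then (if (i : ℕ) = (j : ℕ) then -1 else 0)
    else (if (i : ℕ) + (j : ℕ) = 2 ^ (k + 1) - 1 then 1 else 0)

noncomputable def Fmat (b : Bool) (k : ℕ) : Matrix (Fin (2 ^ (k + 1))) (Fin (2 ^ k)) ℝ :=
  if b then Amat k else Smat k

noncomputable def prodVec : (n : ℕ) → (Fin n → Bool) → (Fin (2 ^ n) → ℝ)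
  | 0, _ => fun _ => 1
  | n + 1, c => (Fmat (c (Fin.last n)) n).mulVec (prodVec n fun i => c i.castSucc)

def SA (n : ℕ) : Set (Fin (2 ^ n) → ℝ) := { v | ∃ c : Fin n → Bool, v = prodVec n c }

lemma two_pow_succ' (n : ℕ) : 2 ^ (n + 1) = 2 ^ n + 2 ^ n := by ring

/-- fold the index set of size `2^(n+1)` onto the first half, reflecting the second half. -/
def foldIdx (n : ℕ) (j : Fin (2 ^ (n + 1))) : Fin (2 ^ n) :=
  if h : (j : ℕ) < 2 ^ n then ⟨j, h⟩
  else ⟨2 ^ (n + 1) - 1 - (j : ℕ), by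
    have := j.isLt
    have h2 := two_pow_succ' n
    have h0 := Nat.two_pow_pos n
    omega⟩

lemma Fmat_mulVec (b : Bool) (k : ℕ) (v : Fin (2 ^ k) → ℝ) (j : Fin (2 ^ (k + 1))) :
    (Fmat b k).mulVec v j =
      if (j : ℕ) < 2 ^ k then (if b then -1 else 1) * v (foldIdx k j)
      else v (foldIdx k j) := by
  have h2 := two_pow_succ' k
  have hjlt := j.isLt
  by_cases h : (j : ℕ) < 2 ^ k
  · have key : ∀ c : ℝ, (∑ x : Fin (2 ^ k), (if (j : ℕ) = (x : ℕ) then c else 0) * v x)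
        = c * v ⟨(j : ℕ), h⟩ := by
      intro c
      have : ∀ x : Fin (2 ^ k), ((j : ℕ) = (x : ℕ)) = ((⟨(j : ℕ), h⟩ : Fin (2 ^ k)) = x) := by
        intro x
        simp [Fin.ext_iff]
      simp_rw [this, ite_mul, zero_mul]
      rw [Finset.sum_ite_eq]
      simp
    cases b <;>
      simp only [Fmat, Smat, Amat, Matrix.mulVec, dotProduct, Matrix.of_apply, if_pos h,
        if_true, if_false, Bool.false_eq_true, foldIdx, dif_pos h, key] <;> ring
  · set t : Fin (2 ^ k) := ⟨2 ^ (k + 1) - 1 - (j : ℕ), by omega⟩ with ht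
    have key : (∑ x : Fin (2 ^ k), (if (j : ℕ) + (x : ℕ) = 2 ^ (k + 1) - 1 then (1:ℝ) else 0) * v x)
        = v t := by
      have : ∀ x : Fin (2 ^ k), ((j : ℕ) + (x : ℕ) = 2 ^ (k + 1) - 1) = (t = x) := by
        intro x
        have := x.isLt
        simp only [ht, Fin.ext_iff, eq_iff_iff]
        constructor <;> omega
      simp_rw [this, ite_mul, zero_mul]
      rw [Finset.sum_ite_eq]
      simp
    cases b <;>
      simp only [Fmat, Smat, Amat, Matrix.mulVec, dotProduct, Matrix.of_apply, if_neg h,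
        if_true, if_false, Bool.false_eq_true, foldIdx, dif_neg h, key] <;> rfl

lemma mem_SA_succ {n : ℕ} (b : Bool) {w : Fin (2 ^ n) → ℝ} (hw : w ∈ SA n) :
    (Fmat b n).mulVec w ∈ SA (n + 1) := by
  obtain ⟨c, rfl⟩ := hw
  refine ⟨Fin.snoc c b, ?_⟩
  show _ = (Fmat ((Fin.snoc c b : Fin (n+1) → Bool) (Fin.last n)) n).mulVec
      (prodVec n fun i => (Fin.snoc c b : Fin (n+1) → Bool) i.castSucc)
  simp [Fin.snoc_last, Fin.snoc_castSucc]

lemma ones_mem_SA (n : ℕ) : (fun _ => (1 : ℝ)) ∈ SA n := by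
  refine ⟨fun _ => false, ?_⟩
  induction n with
  | zero => rfl
  | succ n ih =>
    funext j
    show (1 : ℝ) = (Fmat false n).mulVec (prodVec n fun _ => false) j
    rw [← ih, Fmat_mulVec]
    split <;> simp

theorem stmt12_aux (n : ℕ) :
    ∃ g : Fin (2 ^ n) → (Fin n → ℝ),
      Function.Injective g ∧
      Set.range g = {z : Fin n → ℝ | ∀ i, z i = -1 ∨ z i = 1} ∧
      ∀ k l : Fin n, k ≤ l →
        (fun j => if k = l then g j k else g j k * g j l) ∈ SA n := by
  induction n with
  | zero =>
    refine ⟨fun _ _ => 1, ?_, ?_, ?_⟩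
    · intro a b _
      have h1 : (2:ℕ) ^ 0 = 1 := rfl
      have := a.isLt
      have := b.isLt
      exact Fin.ext (by omega)
    · ext z
      constructor
      · intro _ i
        exact i.elim0
      · intro _
        exact ⟨0, funext fun i => i.elim0⟩
    · intro k l _
      exact k.elim0
  | succ n ih =>
    obtain ⟨g, hinj, hrange, hrows⟩ := ih
    have h2 := two_pow_succ' n
    have h0 := Nat.two_pow_pos n
    have hg2 : ∀ j i, g j i = -1 ∨ g j i = 1 := fun j i => by
      have : g j ∈ {z : Fin n → ℝ | ∀ i, z i = -1 ∨ z i = 1} := hrange ▸ Set.mem_range_self j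
      exact this i
    set g' : Fin (2 ^ (n + 1)) → Fin (n + 1) → ℝ :=
      fun j => Fin.snoc (g (foldIdx n j)) (if (j : ℕ) < 2 ^ n then -1 else 1) with hg'def
    have g'cast : ∀ j (i : Fin n), g' j i.castSucc = g (foldIdx n j) i := by
      intro j i; simp [hg'def, Fin.snoc_castSucc]
    have g'last : ∀ j, g' j (Fin.last n) = if (j : ℕ) < 2 ^ n then -1 else 1 := by
      intro j; simp [hg'def, Fin.snoc_last]
    refine ⟨g', ?_, ?_, ?_⟩
    · intro a b hab
      have hlast : (if (a : ℕ) < 2 ^ n then (-1:ℝ) else 1) = (if (b : ℕ) < 2 ^ n then -1 else 1) := by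
        rw [← g'last, ← g'last, hab]
      have hcast : g (foldIdx n a) = g (foldIdx n b) :=
        funext fun i => by rw [← g'cast, ← g'cast, hab]
      have hfold := hinj hcast
      have ha' := a.isLt
      have hb' := b.isLt
      by_cases ha : (a : ℕ) < 2 ^ n <;> by_cases hb : (b : ℕ) < 2 ^ n
      · simp only [foldIdx, dif_pos ha, dif_pos hb, Fin.mk.injEq] at hfold
        exact Fin.ext hfold
      · rw [if_pos ha, if_neg hb] at hlast
        norm_num at hlast
      · rw [if_neg ha, if_pos hb] at hlast
        norm_num at hlast
      · simp only [foldIdx, dif_neg ha, dif_neg hb, Fin.mk.injEq] at hfold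
        exact Fin.ext (by omega)
    · ext z
      constructor
      · rintro ⟨j, rfl⟩ i
        refine Fin.lastCases ?_ ?_ i
        · rw [g'last]; split <;> simp
        · intro i'
          rw [g'cast]
          exact hg2 _ _
      · intro hz
        have hz' : (fun i : Fin n => z i.castSucc) ∈ Set.range g := by
          rw [hrange]
          exact fun i => hz i.castSucc
        obtain ⟨j0, hj0⟩ := hz'
        have hj0lt := j0.isLt
        rcases hz (Fin.last n) with hzl | hzl
        · refine ⟨⟨(j0 : ℕ), by omega⟩, funext fun i => ?_⟩
          have hfold : foldIdx n (⟨(j0 : ℕ), by omega⟩ : Fin (2 ^ (n + 1))) = j0 := by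
            simp only [foldIdx, dif_pos hj0lt]
          refine Fin.lastCases ?_ ?_ i
          · rw [g'last, hzl, if_pos hj0lt]
          · intro i'
            rw [g'cast, hfold, hj0]
        · refine ⟨⟨2 ^ (n + 1) - 1 - (j0 : ℕ), by omega⟩, funext fun i => ?_⟩
          have hge : ¬ ((2 ^ (n + 1) - 1 - (j0 : ℕ)) < 2 ^ n) := by omega
          have hfold : foldIdx n (⟨2 ^ (n + 1) - 1 - (j0 : ℕ), by omega⟩ : Fin (2 ^ (n + 1))) = j0 := by
            simp only [foldIdx, dif_neg hge]
            exact Fin.ext (by simp; omega)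
          refine Fin.lastCases ?_ ?_ i
          · rw [g'last, hzl, if_neg hge]
          · intro i'
            rw [g'cast, hfold, hj0]
    · intro k l hkl
      rcases Fin.eq_castSucc_or_eq_last l with ⟨l', rfl⟩ | rfl
      · rcases Fin.eq_castSucc_or_eq_last k with ⟨k', rfl⟩ | rfl
        · have hk'l' : k' ≤ l' := by
            have := hkl
            simpa [Fin.castSucc_le_castSucc_iff] using this
          have hv := hrows k' l' hk'l'
          have heq : (fun j => if k'.castSucc = l'.castSucc then g' j k'.castSucc
                else g' j k'.castSucc * g' j l'.castSucc)
              = (Fmat false n).mulVec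
                  (fun j' => if k' = l' then g j' k' else g j' k' * g j' l') := by
            funext j
            rw [Fmat_mulVec]
            simp only [g'cast, Fin.castSucc_inj, Bool.false_eq_true, if_false, one_mul, ite_self]
          rw [heq]
          exact mem_SA_succ false hv
        · exfalso
          have : (Fin.last n : Fin (n + 1)) ≤ l'.castSucc := hkl
          have h1 : (n : ℕ) ≤ (l' : ℕ) := this
          have := l'.isLt
          omega
      · rcases Fin.eq_castSucc_or_eq_last k with ⟨k', rfl⟩ | rfl
        · have hne : k'.castSucc ≠ Fin.last n := Fin.ne_last_of_lt (Fin.castSucc_lt_last k')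
          have hv := hrows k' k' le_rfl
          simp only [if_pos rfl] at hv
          have heq : (fun j => if k'.castSucc = Fin.last n then g' j k'.castSucc
                else g' j k'.castSucc * g' j (Fin.last n))
              = (Fmat true n).mulVec (fun j' => g j' k') := by
            funext j
            rw [Fmat_mulVec, if_neg hne]
            simp only [g'cast, g'last, if_true]
            split <;> ring
          rw [heq]
          exact mem_SA_succ true hv
        · have heq : (fun j => if (Fin.last n : Fin (n+1)) = Fin.last n then g' j (Fin.last n)
                else g' j (Fin.last n) * g' j (Fin.last n))
              = (Fmat true n).mulVec (fun _ => (1:ℝ)) := by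
            funext j
            rw [Fmat_mulVec, if_pos rfl]
            simp only [g'last, if_true]
            split <;> ring
          rw [heq]
          exact mem_SA_succ true (ones_mem_SA n)

theorem stmt12 (n : ℕ) (hn : 1 ≤ n) :
    ∃ g : Fin (2 ^ n) → (Fin n → ℝ),
      Function.Injective g ∧
      Set.range g = {z : Fin n → ℝ | ∀ i, z i = -1 ∨ z i = 1} ∧
      ∀ k l : Fin n, k ≤ l →
        (fun j => if k = l then g j k else g j k * g j l) ∈ SA n := stmt12_aux n
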